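/- Let S_0 be an isotropic subspace of F_2^{2n} and suppose a sequence of measurements is applied, maintaining sets C (evolved stabilizers with associated original stabilizers) and V (accumulated measurements) via the distance-algorithm update rules. Then at every time step, for every c ∈ C with associated stabilizer s_c ∈ ⟨S_0⟩, the product c·s_c lies in the group generated by the measurements performed so far; equivalently, c + s_c ∈ span(V ∪ all measurement vectors) in F_2^{2n}, so the outcome of c·s_c is determined by recorded measurement outcomes. -/

import Mathlib

abbrev PauliVec (n : ℕ) := (Fin n → ZMod 2) × (Fin n → ZMod 2)

def sympl {n : ℕ} (v w : PauliVec n) : ZMod 2 :=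
  ∑ i, (v.1 i * w.2 i + v.2 i * w.1 i)

/-- The state of the distance algorithm: `C` is the list of evolved stabilizer
generators, each paired with its associated original stabilizer; `V` is the list
of accumulated (updated) measurement operators; `meas` records all measurement
operators performed so far. -/
structure AlgState (n : ℕ) where
  C : List (PauliVec n × PauliVec n)
  V : List (PauliVec n)
  meas : List (PauliVec n)

/-- Initial state of the distance algorithm: `C = S₀` (each generator associated
with itself), `V` empty, no measurements yet. -/
def initState {n : ℕ} (S₀ : List (PauliVec n)) : AlgState n :=
  ⟨S₀.map fun s => (s, s), [], []⟩

/-- One step of the distance algorithm, processing the measurement `m` according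
to cases 1–4 (depending on which elements of `C` and `V` anticommute with `m`). -/
inductive Step {n : ℕ} : AlgState n → PauliVec n → AlgState n → Prop
  | case1 (σ : AlgState n) (m : PauliVec n)
      (hC : ∀ cs ∈ σ.C, sympl cs.1 m = 0) (hV : ∀ v ∈ σ.V, sympl v m = 0) :
      Step σ m ⟨σ.C, σ.V ++ [m], σ.meas ++ [m]⟩
  | case2 (σ : AlgState n) (m : PauliVec n) (cj : PauliVec n × PauliVec n)
      (hcj : cj ∈ σ.C) (hanti : sympl cj.1 m = 1)
      (hV : ∀ v ∈ σ.V, sympl v m = 0) :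
      Step σ m ⟨(σ.C.erase cj).map fun cs =>
          if sympl cs.1 m = 1 then (cs.1 + cj.1, cs.2 + cj.2) else cs,
        σ.V ++ [m], σ.meas ++ [m]⟩
  | case3 (σ : AlgState n) (m : PauliVec n) (mj : PauliVec n)
      (hmj : mj ∈ σ.V) (hanti : sympl mj m = 1)
      (hC : ∀ cs ∈ σ.C, sympl cs.1 m = 0) :
      Step σ m ⟨σ.C,
        ((σ.V.erase mj).map fun v => if sympl v m = 1 then v + mj else v) ++ [m],
        σ.meas ++ [m]⟩
  | case4 (σ : AlgState n) (m : PauliVec n) (mj : PauliVec n)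
      (hmj : mj ∈ σ.V) (hanti : sympl mj m = 1)
      (cj : PauliVec n × PauliVec n) (hcj : cj ∈ σ.C) (hcanti : sympl cj.1 m = 1) :
      Step σ m ⟨σ.C.map fun cs =>
          if sympl cs.1 m = 1 then (cs.1 + mj, cs.2) else cs,
        ((σ.V.erase mj).map fun v => if sympl v m = 1 then v + mj else v) ++ [m],
        σ.meas ++ [m]⟩

/-- Running the distance algorithm on a list of measurements. -/
inductive RunList {n : ℕ} : AlgState n → List (PauliVec n) → AlgState n → Prop
  | nil (σ : AlgState n) : RunList σ [] σ
  | cons {σ σ' σ'' : AlgState n} {m : PauliVec n} {ms : List (PauliVec n)} :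
      Step σ m σ' → RunList σ' ms σ'' → RunList σ (m :: ms) σ''

open Submodule in
/-- The `F₂`-span of a list of Pauli vectors. -/
def listSpan {n : ℕ} (L : List (PauliVec n)) : Submodule (ZMod 2) (PauliVec n) :=
  span (ZMod 2) {v | v ∈ L}

lemma mem_listSpan_of_mem {n : ℕ} {L : List (PauliVec n)} {v : PauliVec n}
    (hv : v ∈ L) : v ∈ listSpan L :=
  Submodule.subset_span hv

lemma listSpan_mono {n : ℕ} {L L' : List (PauliVec n)} (h : ∀ x ∈ L, x ∈ L') :
    listSpan L ≤ listSpan L' :=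
  Submodule.span_mono h

lemma pauli_add_self {n : ℕ} (v : PauliVec n) : v + v = 0 := by
  have : v + v = (1 + 1 : ZMod 2) • v := by rw [add_smul, one_smul]
  rw [this, show (1 + 1 : ZMod 2) = 0 by decide, zero_smul]

/-- The strengthened invariant. -/
def AlgInv {n : ℕ} (σ : AlgState n) : Prop :=
  (∀ cs ∈ σ.C, cs.1 + cs.2 ∈ listSpan σ.meas) ∧
  (∀ v ∈ σ.V, v ∈ listSpan σ.meas)

lemma step_preserves {n : ℕ} {σ σ' : AlgState n} {m : PauliVec n}
    (hstep : Step σ m σ') (hinv : AlgInv σ) : AlgInv σ' := by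
  obtain ⟨hC, hV⟩ := hinv
  have hmono : listSpan σ.meas ≤ listSpan (σ.meas ++ [m]) :=
    listSpan_mono (fun x hx => List.mem_append_left _ hx)
  have hm : m ∈ listSpan (σ.meas ++ [m]) :=
    mem_listSpan_of_mem (List.mem_append_right _ (List.mem_singleton_self m))
  cases hstep with
  | case1 hC' hV' =>
      refine ⟨fun cs hcs => hmono (hC cs hcs), fun v hv => ?_⟩
      rcases List.mem_append.mp hv with h | h
      · exact hmono (hV v h)
      · rw [List.mem_singleton.mp h]; exact hm
  | case2 cj hcj hanti hV' =>
      constructor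
      · intro cs' hcs'
        rcases List.mem_map.mp hcs' with ⟨cs, hcs, rfl⟩
        have hcsC : cs ∈ σ.C := List.mem_of_mem_erase hcs
        by_cases h : sympl cs.1 m = 1
        · simp only [h, if_pos]
          have : (cs.1 + cj.1) + (cs.2 + cj.2) = (cs.1 + cs.2) + (cj.1 + cj.2) := by
            abel
          rw [this]
          exact add_mem (hmono (hC cs hcsC)) (hmono (hC cj hcj))
        · simp only [h, if_neg, not_false_iff]
          exact hmono (hC cs hcsC)
      · intro v hv
        rcases List.mem_append.mp hv with h | h
        · exact hmono (hV v h)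
        · rw [List.mem_singleton.mp h]; exact hm
  | case3 mj hmj hanti hC' =>
      constructor
      · intro cs hcs; exact hmono (hC cs hcs)
      · intro v hv
        rcases List.mem_append.mp hv with h | h
        · rcases List.mem_map.mp h with ⟨w, hw, rfl⟩
          have hwV : w ∈ σ.V := List.mem_of_mem_erase hw
          by_cases h1 : sympl w m = 1
          · simp only [h1, if_pos]
            exact add_mem (hmono (hV w hwV)) (hmono (hV mj hmj))
          · simp only [h1, if_neg, not_false_iff]
            exact hmono (hV w hwV)
        · rw [List.mem_singleton.mp h]; exact hm
  | case4 mj hmj hanti cj hcj hcanti =>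
      constructor
      · intro cs' hcs'
        rcases List.mem_map.mp hcs' with ⟨cs, hcs, rfl⟩
        by_cases h : sympl cs.1 m = 1
        · simp only [h, if_pos]
          have : (cs.1 + mj) + cs.2 = (cs.1 + cs.2) + mj := by abel
          rw [this]
          exact add_mem (hmono (hC cs hcs)) (hmono (hV mj hmj))
        · simp only [h, if_neg, not_false_iff]
          exact hmono (hC cs hcs)
      · intro v hv
        rcases List.mem_append.mp hv with h | h
        · rcases List.mem_map.mp h with ⟨w, hw, rfl⟩
          have hwV : w ∈ σ.V := List.mem_of_mem_erase hw
          by_cases h1 : sympl w m = 1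
          · simp only [h1, if_pos]
            exact add_mem (hmono (hV w hwV)) (hmono (hV mj hmj))
          · simp only [h1, if_neg, not_false_iff]
            exact hmono (hV w hwV)
        · rw [List.mem_singleton.mp h]; exact hm

lemma run_preserves {n : ℕ} {σ σ' : AlgState n} {ms : List (PauliVec n)}
    (hrun : RunList σ ms σ') (hinv : AlgInv σ) : AlgInv σ' := by
  induction hrun with
  | nil => exact hinv
  | cons hstep _ ih => exact ih (step_preserves hstep hinv)

/-- distance-algorithm invariant: starting from an isotropic
stabilizer group `S₀`, after processing any sequence of measurements, every
`c ∈ C` with associated stabilizer `s_c` satisfies `c + s_c ∈ span(meas)`: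
the outcome of `c·s_c` is determined by the recorded measurement outcomes. -/
theorem distance_algorithm_invariant {n : ℕ} (S₀ : List (PauliVec n))
    (hiso : ∀ x ∈ listSpan S₀, ∀ y ∈ listSpan S₀, sympl x y = 0)
    (ms : List (PauliVec n)) (σ : AlgState n)
    (hrun : RunList (initState S₀) ms σ) :
    ∀ cs ∈ σ.C, cs.1 + cs.2 ∈ listSpan σ.meas := by
  have hinit : AlgInv (initState S₀) := by
    constructor
    · intro cs hcs
      rcases List.mem_map.mp hcs with ⟨s, _, rfl⟩
      simp only [pauli_add_self]
      exact Submodule.zero_mem _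
    · intro v hv; exact absurd hv List.not_mem_nil
  exact (run_preserves hrun hinit).1
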